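/- With G symmetric positive definite and B skew-symmetric, the generalized metric H(G,B) = [[G − B G⁻¹ B, B G⁻¹],[−G⁻¹ B, G⁻¹]] is symmetric and positive definite. -/

import Mathlib

open Matrix

lemma posDef_fromBlocks_diag {d : ℕ} {A C : Matrix (Fin d) (Fin d) ℝ}
    (hA : A.PosDef) (hC : C.PosDef) :
    (fromBlocks A 0 0 C : Matrix (Fin d ⊕ Fin d) (Fin d ⊕ Fin d) ℝ).PosDef := by
  rw [posDef_iff_dotProduct_mulVec]
  constructor
  · show _ᴴ = _
    rw [conjTranspose_eq_transpose_of_trivial, fromBlocks_transpose]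
    rw [show Aᵀ = A from (conjTranspose_eq_transpose_of_trivial A) ▸ hA.1.eq,
      show Cᵀ = C from (conjTranspose_eq_transpose_of_trivial C) ▸ hC.1.eq]
    simp
  · intro x hx
    have hsplit : star x ⬝ᵥ (fromBlocks A 0 0 C) *ᵥ x =
        star (x ∘ Sum.inl) ⬝ᵥ A *ᵥ (x ∘ Sum.inl) +
        star (x ∘ Sum.inr) ⬝ᵥ C *ᵥ (x ∘ Sum.inr) := by
      simp [fromBlocks_mulVec, dotProduct_block]
    rw [hsplit]
    rcases (em (x ∘ Sum.inl = 0)) with h1 | h1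
    · have h2 : x ∘ Sum.inr ≠ 0 := by
        intro h2
        apply hx
        funext i
        cases i with
        | inl i => exact congrFun h1 i
        | inr i => exact congrFun h2 i
      have := hC.dotProduct_mulVec_pos h2
      have := hA.posSemidef.dotProduct_mulVec_nonneg (x ∘ Sum.inl)
      positivity
    · have := hA.dotProduct_mulVec_pos h1
      have := hC.posSemidef.dotProduct_mulVec_nonneg (x ∘ Sum.inr)
      positivity

lemma posDef_conj {n : Type*} [Fintype n] [DecidableEq n]
    {D : Matrix n n ℝ} (hD : D.PosDef) (A : Matrix n n ℝ) [Invertible A] :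
    (A * D * Aᴴ).PosDef := by
  rw [posDef_iff_dotProduct_mulVec]
  constructor
  · exact (hD.posSemidef.mul_mul_conjTranspose_same A).1
  · intro x hx
    have hAx : Aᴴ *ᵥ x ≠ 0 := by
      intro h
      apply hx
      have hinj : Function.Injective (Aᴴ).mulVec := by
        haveI : Invertible (Aᴴ) := invertibleConjTranspose A
        exact mulVec_injective_of_invertible Aᴴ
      exact hinj (h.trans (mulVec_zero _).symm)
    have hpos := hD.dotProduct_mulVec_pos hAx
    have key : star x ⬝ᵥ (A * D * Aᴴ) *ᵥ x = star (Aᴴ *ᵥ x) ⬝ᵥ D *ᵥ (Aᴴ *ᵥ x) := by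
      simp only [star_mulVec, conjTranspose_conjTranspose, dotProduct_mulVec, vecMul_vecMul, Matrix.mul_assoc]
    rw [key]; exact hpos

/-- the generalized metric `H(G,B)` is symmetric positive definite. -/
theorem stmt8 (d : ℕ) (G B : Matrix (Fin d) (Fin d) ℝ)
    (hG : G.PosDef) (hB : Bᵀ = -B) :
    (fromBlocks (G - B * G⁻¹ * B) (B * G⁻¹) (-(G⁻¹ * B)) G⁻¹ :
      Matrix (Fin d ⊕ Fin d) (Fin d ⊕ Fin d) ℝ).PosDef := by
  have hD : (fromBlocks G 0 0 G⁻¹ : Matrix (Fin d ⊕ Fin d) (Fin d ⊕ Fin d) ℝ).PosDef :=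
    posDef_fromBlocks_diag hG hG.inv
  set A : Matrix (Fin d ⊕ Fin d) (Fin d ⊕ Fin d) ℝ := fromBlocks 1 B 0 1 with hA
  haveI : Invertible (1 : Matrix (Fin d) (Fin d) ℝ) := invertibleOne
  haveI : Invertible A := fromBlocksZero₂₁Invertible 1 B 1
  have hAH : Aᴴ = fromBlocks 1 0 (-B) 1 := by
    rw [hA, fromBlocks_conjTranspose]
    rw [conjTranspose_eq_transpose_of_trivial B, hB]
    simp
  have hfact : fromBlocks (G - B * G⁻¹ * B) (B * G⁻¹) (-(G⁻¹ * B)) G⁻¹ =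
      A * (fromBlocks G 0 0 G⁻¹) * Aᴴ := by
    rw [hAH, hA, fromBlocks_multiply, fromBlocks_multiply]
    congr 1 <;> simp [Matrix.mul_assoc, sub_eq_add_neg]
  rw [hfact]
  exact posDef_conj hD A
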